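/- Let N be a locally Hermitian symmetric space and u : S¹ × (0,T) → N a smooth solution of the Schrödinger-Airy flow u_t = α J∇_x u_x + β(∇_x² u_x + (1/2) R(u_x, Ju_x)Ju_x). Then the pseudo-helicity E₂(u) = ∫_{S¹} ⟨∇_x u_x, J u_x⟩ dx is conserved in time. -/
import Mathlib


open scoped RealInnerProductSpace
open Real

/-- An abstract model of the data attached to a smooth map `u : S¹ × ℝ → N` into a
Riemannian manifold: sections of the pullback bundle `u⁻¹TN` (with fibers identified with
a fixed inner product space `V`), covariant derivatives `Dx`, `Dt`, the curvature `R` of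
`N` along `u`, together with their standard properties (periodicity in `x`,
torsion-freeness, the commutation formula `∇ₜ∇ₓ − ∇ₓ∇ₜ = R(uₜ,uₓ)`, metric compatibility,
differentiation under the integral sign, and the curvature symmetries). -/
structure CovSystem (V : Type*) [NormedAddCommGroup V] [InnerProductSpace ℝ V] where
  Sec : Set (ℝ → ℝ → V)
  ux : ℝ → ℝ → V
  ut : ℝ → ℝ → V
  Dx : (ℝ → ℝ → V) → ℝ → ℝ → V
  Dt : (ℝ → ℝ → V) → ℝ → ℝ → V
  R : ℝ → ℝ → V → V → V → V
  mem_ux : ux ∈ Sec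
  mem_ut : ut ∈ Sec
  mem_Dx : ∀ s ∈ Sec, Dx s ∈ Sec
  mem_Dt : ∀ s ∈ Sec, Dt s ∈ Sec
  mem_R : ∀ a ∈ Sec, ∀ b ∈ Sec, ∀ c ∈ Sec,
    (fun t x => R t x (a t x) (b t x) (c t x)) ∈ Sec
  cont : ∀ s ∈ Sec, Continuous fun p : ℝ × ℝ => s p.1 p.2
  periodic : ∀ s ∈ Sec, ∀ t x, s t (x + 2 * π) = s t x
  torsion : Dt ux = Dx ut
  comm : ∀ s ∈ Sec, ∀ t x,
    Dt (Dx s) t x - Dx (Dt s) t x = R t x (ut t x) (ux t x) (s t x)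
  metric_x : ∀ s ∈ Sec, ∀ r ∈ Sec, ∀ t x,
    HasDerivAt (fun y => ⟪s t y, r t y⟫) (⟪Dx s t x, r t x⟫ + ⟪s t x, Dx r t x⟫) x
  metric_t : ∀ s ∈ Sec, ∀ r ∈ Sec, ∀ t x,
    HasDerivAt (fun τ => ⟪s τ x, r τ x⟫) (⟪Dt s t x, r t x⟫ + ⟪s t x, Dt r t x⟫) t
  dint : ∀ s ∈ Sec, ∀ r ∈ Sec, ∀ t,
    HasDerivAt (fun τ => ∫ x in (0 : ℝ)..(2 * π), ⟪s τ x, r τ x⟫)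
      (∫ x in (0 : ℝ)..(2 * π), (⟪Dt s t x, r t x⟫ + ⟪s t x, Dt r t x⟫)) t
  R_antisym : ∀ t x a b c, R t x a b c = -R t x b a c
  R_skew : ∀ t x a b c d, ⟪R t x a b c, d⟫ = -⟪R t x a b d, c⟫
  R_pair : ∀ t x a b c d, ⟪R t x a b c, d⟫ = ⟪R t x c d a, b⟫

/-- A `CovSystem` for a map into a Kähler manifold: in addition there is the complex
structure `J` along `u`, which is an almost-complex structure (`J² = −1`), skew-adjoint
with respect to the metric, and parallel (`∇J = 0`, so it commutes with `Dx` and `Dt`). -/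
structure KCovSystem (V : Type*) [NormedAddCommGroup V] [InnerProductSpace ℝ V]
    extends CovSystem V where
  J : ℝ → ℝ → V → V
  mem_J : ∀ s ∈ Sec, (fun t x => J t x (s t x)) ∈ Sec
  J_skew : ∀ t x v w, ⟪J t x v, w⟫ = -⟪v, J t x w⟫
  J_sq : ∀ t x v, J t x (J t x v) = -v
  J_par_x : ∀ s ∈ Sec, ∀ t x, Dx (fun t x => J t x (s t x)) t x = J t x (Dx s t x)
  J_par_t : ∀ s ∈ Sec, ∀ t x, Dt (fun t x => J t x (s t x)) t x = J t x (Dt s t x)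

/-- On a locally Hermitian symmetric space, along any smooth solution of the
Schrödinger–Airy flow `uₜ = α J∇ₓuₓ + β(∇ₓ²uₓ + (1/2) R(uₓ, Juₓ)Juₓ)`, the
pseudo-helicity `E₂(u) = ∫ ⟨∇ₓuₓ, Juₓ⟩ dx` is conserved. -/
private lemma scalar_key {V : Type*} [NormedAddCommGroup V] [InnerProductSpace ℝ V]
    (J : V → V) (R : V → V → V → V) (α β : ℝ)
    (u w dw vt dut ddut : V)
    (jskew : ∀ v z, ⟪J v, z⟫ = -⟪v, J z⟫)
    (jsq : ∀ v, J (J v) = -v)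
    (rpair : ∀ a b c d, ⟪R a b c, d⟫ = ⟪R c d a, b⟫)
    (ranti : ∀ a b c, R a b c = -R b a c)
    (rskew : ∀ a b c d, ⟪R a b c, d⟫ = -⟪R a b d, c⟫)
    (rj : ∀ a b c d, ⟪R a b c, J d⟫ = -⟪R a b (J c), d⟫)
    (hfl : vt = α • J w + β • (dw + (1/2:ℝ) • R u (J u) (J u))) :
    ⟪ddut, J u⟫ + ⟪dut, J w⟫ - 2 * (⟪dut, J w⟫ + ⟪vt, J dw⟫)
      + α * (⟪dw, w⟫ + ⟪w, dw⟫)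
      + α / 4 * (⟪R w (J u) (J u) + R u (J w) (J u) + R u (J u) (J w), u⟫
          + ⟪R u (J u) (J u), w⟫)
    = ⟪ddut + R vt u u, J u⟫ + ⟪w, J dut⟫ := by
  have hQJ : ∀ z, ⟪R u (J u) u, J z⟫ = -⟪R u (J u) (J u), z⟫ := fun z => rj u (J u) u z
  have hJ0 : ∀ v : V, ⟪v, J v⟫ = 0 := by
    intro v
    have h1 := jskew v v
    have h2 := real_inner_comm (J v) v
    linarith
  have hJJ : ∀ v z : V, ⟪J v, J z⟫ = ⟪v, z⟫ := by
    intro v z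
    rw [jskew, jsq, inner_neg_right, neg_neg]
  have hvJ : ∀ v z : V, ⟪v, J z⟫ = -⟪J v, z⟫ := by
    intro v z
    have := jskew v z
    linarith
  have hT3 : ⟪R u (J u) (J w), u⟫ = ⟪R u (J u) (J u), w⟫ := by
    rw [rskew, hQJ, neg_neg]
  have hT2 : ⟪R u (J w) (J u), u⟫ = ⟪R u (J u) (J u), w⟫ := by
    rw [rpair, ranti, inner_neg_left, hQJ, neg_neg]
  have hT1 : ⟪R w (J u) (J u), u⟫ = ⟪R u (J u) (J u), w⟫ := by
    rw [rpair, ranti, inner_neg_left, rj, neg_neg, hT3]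
  have hT4 : ⟪R vt u u, J u⟫ = -⟪R u (J u) u, vt⟫ := by
    rw [rj, rpair, ranti, inner_neg_left, neg_neg, rskew]
  have hQdw : ⟪R u (J u) u, dw⟫ = ⟪R u (J u) (J u), J dw⟫ := by
    have h := hQJ (J dw)
    rw [jsq, inner_neg_right] at h
    linarith
  have hQP : ⟪R u (J u) u, R u (J u) (J u)⟫ = 0 := by
    have h := hQJ (J (R u (J u) (J u)))
    rw [jsq, inner_neg_right] at h
    have h0 := hJ0 (R u (J u) (J u))
    linarith
  have ha3 : ⟪R u (J u) u, vt⟫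
      = -(α * ⟪R u (J u) (J u), w⟫) + β * ⟪R u (J u) (J u), J dw⟫ := by
    rw [hfl]
    rw [inner_add_right, real_inner_smul_right, real_inner_smul_right,
      inner_add_right, real_inner_smul_right, hQJ, hQdw, hQP]
    ring
  have ha2 : ⟪vt, J dw⟫ = α * ⟪w, dw⟫ + β / 2 * ⟪R u (J u) (J u), J dw⟫ := by
    rw [hfl]
    rw [inner_add_left, real_inner_smul_left, real_inner_smul_left,
      inner_add_left, real_inner_smul_left, hJJ, hJ0]
    ring
  have ha1 : ⟪w, J dut⟫ = -⟪dut, J w⟫ := by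
    rw [hvJ w dut, real_inner_comm (J w) dut]
  rw [inner_add_left, inner_add_left, inner_add_left, hT1, hT2, hT3, hT4, ha1, ha2, ha3,
    real_inner_comm dw w]
  ring

private noncomputable def HfAux {V : Type*} [NormedAddCommGroup V] [InnerProductSpace ℝ V]
    (F : KCovSystem V) (α t : ℝ) (y : ℝ) : ℝ :=
  ⟪F.Dx F.ut t y, F.J t y (F.ux t y)⟫ - 2 * ⟪F.ut t y, F.J t y (F.Dx F.ux t y)⟫
    + α * ⟪F.Dx F.ux t y, F.Dx F.ux t y⟫
    + α / 4 * ⟪F.R t y (F.ux t y) (F.J t y (F.ux t y)) (F.J t y (F.ux t y)), F.ux t y⟫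
theorem stmt12 {V : Type*} [NormedAddCommGroup V] [InnerProductSpace ℝ V]
    (F : KCovSystem V) (α β : ℝ)
    (hRx : ∀ a ∈ F.Sec, ∀ b ∈ F.Sec, ∀ c ∈ F.Sec, ∀ t x,
      F.Dx (fun t x => F.R t x (a t x) (b t x) (c t x)) t x
        = F.R t x (F.Dx a t x) (b t x) (c t x) + F.R t x (a t x) (F.Dx b t x) (c t x)
          + F.R t x (a t x) (b t x) (F.Dx c t x))
    (hRt : ∀ a ∈ F.Sec, ∀ b ∈ F.Sec, ∀ c ∈ F.Sec, ∀ t x,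
      F.Dt (fun t x => F.R t x (a t x) (b t x) (c t x)) t x
        = F.R t x (F.Dt a t x) (b t x) (c t x) + F.R t x (a t x) (F.Dt b t x) (c t x)
          + F.R t x (a t x) (b t x) (F.Dt c t x))
    (hRJ : ∀ t x a b c d, ⟪F.R t x a b c, F.J t x d⟫ = -⟪F.R t x a b (F.J t x c), d⟫)
    (hflow : ∀ t x, F.ut t x
      = α • F.J t x (F.Dx F.ux t x)
        + β • (F.Dx (F.Dx F.ux) t x
          + (1 / 2 : ℝ) • F.R t x (F.ux t x) (F.J t x (F.ux t x)) (F.J t x (F.ux t x)))) :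
    ∀ t₁ t₂ : ℝ,
      (∫ x in (0 : ℝ)..(2 * π), ⟪F.Dx F.ux t₁ x, F.J t₁ x (F.ux t₁ x)⟫)
        = ∫ x in (0 : ℝ)..(2 * π), ⟪F.Dx F.ux t₂ x, F.J t₂ x (F.ux t₂ x)⟫ := by
  have mu := F.mem_ux
  have m_ut := F.mem_ut
  have mw := F.mem_Dx _ mu
  have mdut := F.mem_Dx _ m_ut
  have mJu := F.mem_J _ mu
  have mJw := F.mem_J _ mw
  have mP := F.mem_R _ mu _ mJu _ mJu
  have key : ∀ t : ℝ, HasDerivAt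
      (fun τ => ∫ x in (0:ℝ)..(2*π), ⟪F.Dx F.ux τ x, F.J τ x (F.ux τ x)⟫) 0 t := by
    intro t
    have hD := F.dint _ mw _ mJu t
    -- pointwise: the integrand is the derivative of HfAux F α t
    have hderiv : ∀ x ∈ Set.uIcc (0:ℝ) (2*π), HasDerivAt (HfAux F α t)
        (⟪F.Dt (F.Dx F.ux) t x, F.J t x (F.ux t x)⟫
          + ⟪F.Dx F.ux t x, F.Dt (fun t x => F.J t x (F.ux t x)) t x⟫) x := by
      intro x _
      have h1 := F.metric_x _ mdut _ mJu t x
      have h2 := F.metric_x _ m_ut _ mJw t x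
      have h3 := F.metric_x _ mw _ mw t x
      have h4 := F.metric_x _ mP _ mu t x
      have hc := ((h1.sub (h2.const_mul (2:ℝ))).add (h3.const_mul α)).add (h4.const_mul (α/4))
      have e1 : F.Dx (fun t x => F.J t x (F.ux t x)) t x = F.J t x (F.Dx F.ux t x) :=
        F.J_par_x _ mu t x
      have e2 : F.Dx (fun t x => F.J t x (F.Dx F.ux t x)) t x
          = F.J t x (F.Dx (F.Dx F.ux) t x) := F.J_par_x _ mw t x
      have e3 := hRx _ mu _ mJu _ mJu t x
      rw [e1] at e3
      have e4 : F.Dt (F.Dx F.ux) t x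
          = F.Dx (F.Dx F.ut) t x + F.R t x (F.ut t x) (F.ux t x) (F.ux t x) := by
        have h := F.comm _ mu t x
        rw [F.torsion] at h
        have h' := sub_eq_iff_eq_add.mp h
        rw [h', add_comm]
      have e5 : F.Dt (fun t x => F.J t x (F.ux t x)) t x = F.J t x (F.Dx F.ut t x) := by
        rw [F.J_par_t _ mu t x, F.torsion]
      have hval : ⟪F.Dx (F.Dx F.ut) t x, F.J t x (F.ux t x)⟫ +
            ⟪F.Dx F.ut t x, F.Dx (fun t x => F.J t x (F.ux t x)) t x⟫ -
          2 * (⟪F.Dx F.ut t x, F.J t x (F.Dx F.ux t x)⟫ +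
              ⟪F.ut t x, F.Dx (fun t x => F.J t x (F.Dx F.ux t x)) t x⟫) +
          α * (⟪F.Dx (F.Dx F.ux) t x, F.Dx F.ux t x⟫
              + ⟪F.Dx F.ux t x, F.Dx (F.Dx F.ux) t x⟫) +
          α / 4 * (⟪F.Dx (fun t x =>
                F.R t x (F.ux t x) (F.J t x (F.ux t x)) (F.J t x (F.ux t x))) t x, F.ux t x⟫ +
              ⟪F.R t x (F.ux t x) (F.J t x (F.ux t x)) (F.J t x (F.ux t x)), F.Dx F.ux t x⟫)
          = ⟪F.Dt (F.Dx F.ux) t x, F.J t x (F.ux t x)⟫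
            + ⟪F.Dx F.ux t x, F.Dt (fun t x => F.J t x (F.ux t x)) t x⟫ := by
        rw [e1, e2, e3, e4, e5]
        exact scalar_key (F.J t x) (F.R t x) α β (F.ux t x) (F.Dx F.ux t x)
          (F.Dx (F.Dx F.ux) t x) (F.ut t x) (F.Dx F.ut t x) (F.Dx (F.Dx F.ut) t x)
          (F.J_skew t x) (F.J_sq t x) (F.R_pair t x) (F.R_antisym t x) (F.R_skew t x)
          (hRJ t x) (hflow t x)
      exact hval ▸ hc
    have c1 : Continuous fun x : ℝ => ((t, x) : ℝ × ℝ) := continuous_const.prodMk continuous_id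
    have cs : ∀ s ∈ F.Sec, Continuous fun x : ℝ => s t x :=
      fun s hs => (F.cont s hs).comp c1
    have hint : IntervalIntegrable (fun x =>
        ⟪F.Dt (F.Dx F.ux) t x, F.J t x (F.ux t x)⟫
          + ⟪F.Dx F.ux t x, F.Dt (fun t x => F.J t x (F.ux t x)) t x⟫)
        MeasureTheory.volume 0 (2*π) :=
      (((cs _ (F.mem_Dt _ mw)).inner (cs _ mJu)).add
        ((cs _ mw).inner (cs _ (F.mem_Dt _ mJu)))).intervalIntegrable _ _
    have heq := intervalIntegral.integral_eq_sub_of_hasDerivAt hderiv hint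
    have hsper : ∀ s ∈ F.Sec, s t (2*π) = s t 0 := fun s hs => by
      simpa using F.periodic s hs t 0
    have hper : HfAux F α t (2*π) = HfAux F α t 0 := by
      unfold HfAux
      rw [hsper _ mP, hsper _ mJw, hsper _ mJu, hsper _ mdut, hsper _ m_ut, hsper _ mw,
        hsper _ mu]
    have hzero : (∫ x in (0:ℝ)..(2*π),
        (⟪F.Dt (F.Dx F.ux) t x, F.J t x (F.ux t x)⟫
          + ⟪F.Dx F.ux t x, F.Dt (fun t x => F.J t x (F.ux t x)) t x⟫)) = 0 := by
      rw [heq, hper, sub_self]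
    convert hD using 1
    exact hzero.symm
  intro t₁ t₂
  exact is_const_of_deriv_eq_zero (fun τ => (key τ).differentiableAt)
    (fun τ => (key τ).deriv) t₁ t₂
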